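/- Let F be a free group and let x, y, z ∈ F satisfy x²y²z² = 1. Then x, y, z pairwise commute; in particular they all lie in a common cyclic subgroup. -/

import Mathlib

open scoped commutatorElement

/-- The integer Heisenberg group, used as a test group. -/
@[ext]
structure Heis where
  a : ℤ
  b : ℤ
  c : ℤ
deriving DecidableEq

namespace Heis

protected def mul (p q : Heis) : Heis := ⟨p.a + q.a, p.b + q.b, p.c + q.c + p.a * q.b⟩
protected def inv (p : Heis) : Heis := ⟨-p.a, -p.b, -p.c + p.a * p.b⟩

instance : Group Heis where
  mul := Heis.mul
  one := ⟨0, 0, 0⟩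
  inv := Heis.inv
  mul_assoc p q r := by
    show Heis.mul (Heis.mul p q) r = Heis.mul p (Heis.mul q r)
    simp only [Heis.mul]
    ext <;> dsimp <;> ring
  one_mul p := by
    show Heis.mul ⟨0,0,0⟩ p = p
    simp only [Heis.mul]
    ext <;> dsimp <;> ring
  mul_one p := by
    show Heis.mul p ⟨0,0,0⟩ = p
    simp only [Heis.mul]
    ext <;> dsimp <;> ring
  inv_mul_cancel p := by
    show Heis.mul (Heis.inv p) p = ⟨0,0,0⟩
    simp only [Heis.mul, Heis.inv]
    ext <;> dsimp <;> ring

@[simp] lemma mul_a (p q : Heis) : (p * q).a = p.a + q.a := rfl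
@[simp] lemma mul_b (p q : Heis) : (p * q).b = p.b + q.b := rfl
@[simp] lemma mul_c (p q : Heis) : (p * q).c = p.c + q.c + p.a * q.b := rfl
@[simp] lemma one_a : (1 : Heis).a = 0 := rfl
@[simp] lemma one_b : (1 : Heis).b = 0 := rfl
@[simp] lemma one_c : (1 : Heis).c = 0 := rfl
@[simp] lemma inv_a (p : Heis) : (p⁻¹).a = -p.a := rfl
@[simp] lemma inv_b (p : Heis) : (p⁻¹).b = -p.b := rfl
@[simp] lemma inv_c (p : Heis) : (p⁻¹).c = -p.c + p.a * p.b := rfl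

/-- X generator -/
def X : Heis := ⟨1, 0, 0⟩
/-- Y generator -/
def Y : Heis := ⟨0, 1, 0⟩

lemma commutator_eq (p q : Heis) : ⁅p, q⁆ = ⟨0, 0, p.a * q.b - p.b * q.a⟩ := by
  show p * q * p⁻¹ * q⁻¹ = _
  ext <;> simp <;> ring

lemma sq_eq (p : Heis) : p ^ 2 = ⟨2 * p.a, 2 * p.b, 2 * p.c + p.a * p.b⟩ := by
  rw [pow_two]; ext <;> simp <;> ring

lemma not_commute_XY : ¬ (X * Y = Y * X) := by decide

/-- projection to the abelianization -/
def proj : Heis →* Multiplicative (ℤ × ℤ) where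
  toFun p := Multiplicative.ofAdd (p.a, p.b)
  map_one' := rfl
  map_mul' p q := by
    simp [← ofAdd_add, Prod.ext_iff]

@[simp] lemma proj_apply (p : Heis) : proj p = Multiplicative.ofAdd (p.a, p.b) := rfl

end Heis

open Subgroup

section Helpers

variable {ι : Type*}

lemma mult_sq_pair {x : Multiplicative (ℤ × ℤ)} (h : x ^ 2 = 1) : x = 1 := by
  have h2 : Multiplicative.toAdd (x ^ 2) = Multiplicative.toAdd (1 : Multiplicative (ℤ × ℤ)) := by
    rw [h]
  simp only [pow_two, toAdd_mul, toAdd_one] at h2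
  have e1 : (Multiplicative.toAdd x).1 + (Multiplicative.toAdd x).1 = 0 := by
    simpa using congrArg Prod.fst h2
  have e2 : (Multiplicative.toAdd x).2 + (Multiplicative.toAdd x).2 = 0 := by
    simpa using congrArg Prod.snd h2
  have : Multiplicative.toAdd x = 0 :=
    Prod.ext_iff.mpr ⟨by simp only [Prod.fst_zero]; omega, by simp only [Prod.snd_zero]; omega⟩
  have h3 : Multiplicative.ofAdd (Multiplicative.toAdd x) = Multiplicative.ofAdd 0 := by rw [this]
  simpa using h3

lemma mult_sq_triple {x : Multiplicative (ℤ × ℤ × ℤ)} (h : x ^ 2 = 1) : x = 1 := by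
  have h2 : Multiplicative.toAdd (x ^ 2)
      = Multiplicative.toAdd (1 : Multiplicative (ℤ × ℤ × ℤ)) := by rw [h]
  simp only [pow_two, toAdd_mul, toAdd_one] at h2
  have e1 : (Multiplicative.toAdd x).1 + (Multiplicative.toAdd x).1 = 0 := by
    simpa using congrArg Prod.fst h2
  have e2 : (Multiplicative.toAdd x).2.1 + (Multiplicative.toAdd x).2.1 = 0 := by
    simpa using congrArg (fun v => v.2.1) h2
  have e3 : (Multiplicative.toAdd x).2.2 + (Multiplicative.toAdd x).2.2 = 0 := by
    simpa using congrArg (fun v => v.2.2) h2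
  have : Multiplicative.toAdd x = 0 :=
    Prod.ext_iff.mpr ⟨by simp only [Prod.fst_zero]; omega,
      Prod.ext_iff.mpr ⟨by simp only [Prod.snd_zero, Prod.fst_zero]; omega,
        by simp only [Prod.snd_zero]; omega⟩⟩
  have h3 : Multiplicative.ofAdd (Multiplicative.toAdd x) = Multiplicative.ofAdd 0 := by rw [this]
  simpa using h3

lemma FreeGroup.exists_zpow [Subsingleton ι] (t₀ : ι) (g : FreeGroup ι) :
    ∃ n : ℤ, g = FreeGroup.of t₀ ^ n := by
  induction g using FreeGroup.induction_on with
  | C1 => exact ⟨0, by simp⟩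
  | of t => exact ⟨1, by rw [Subsingleton.elim t₀ t]; simp⟩
  | inv_of t ih =>
      obtain ⟨n, hn⟩ := ih
      exact ⟨-n, by rw [hn, ← zpow_neg]⟩
  | mul g₁ g₂ ih₁ ih₂ =>
      obtain ⟨n₁, hn₁⟩ := ih₁
      obtain ⟨n₂, hn₂⟩ := ih₂
      exact ⟨n₁ + n₂, by rw [hn₁, hn₂, zpow_add]⟩

lemma FreeGroup.eq_one_of_empty (hne : ¬ Nonempty ι) (g : FreeGroup ι) : g = 1 := by
  induction g using FreeGroup.induction_on with
  | C1 => rfl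
  | of t => exact (hne ⟨t⟩).elim
  | inv_of t ih => rw [ih, inv_one]
  | mul g₁ g₂ ih₁ ih₂ => rw [ih₁, ih₂, one_mul]

lemma FreeGroup.commute_of_subsingleton [Subsingleton ι] (g h : FreeGroup ι) :
    Commute g h := by
  by_cases hne : Nonempty ι
  · obtain ⟨t₀⟩ := hne
    obtain ⟨m, hm⟩ := FreeGroup.exists_zpow t₀ g
    obtain ⟨n, hn⟩ := FreeGroup.exists_zpow t₀ h
    rw [hm, hn]
    exact (Commute.refl _).zpow_zpow m n
  · rw [FreeGroup.eq_one_of_empty hne g]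
    exact Commute.one_left h

/-- The three given elements, viewed inside the subgroup they generate, generate the top
subgroup. -/
lemma closure_triple_top {G : Type*} [Group G] (a b c : G)
    (ha : a ∈ closure ({a, b, c} : Set G)) (hb : b ∈ closure ({a, b, c} : Set G))
    (hc : c ∈ closure ({a, b, c} : Set G)) :
    closure ({⟨a, ha⟩, ⟨b, hb⟩, ⟨c, hc⟩} : Set (closure ({a, b, c} : Set G))) = ⊤ := by
  set H := closure ({a, b, c} : Set G)
  apply Subgroup.map_injective (H.subtype_injective)
  rw [MonoidHom.map_closure]
  have himg : H.subtype '' ({⟨a, ha⟩, ⟨b, hb⟩, ⟨c, hc⟩} : Set H) = {a, b, c} := by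
    simp [Set.image_insert_eq]
  rw [himg]
  rw [← MonoidHom.range_eq_map, Subgroup.range_subtype]

end Helpers

abbrev M8 := Multiplicative (ZMod 2 × ZMod 2 × ZMod 2)

def M8.mem (g h x : M8) : Prop := x = 1 ∨ x = g ∨ x = h ∨ x = g * h

instance (g h x : M8) : Decidable (M8.mem g h x) := by unfold M8.mem; infer_instance

lemma M8.mul_mem : ∀ g h a b : M8, M8.mem g h a → M8.mem g h b → M8.mem g h (a * b) := by decide

lemma M8.inv_mem : ∀ g h a : M8, M8.mem g h a → M8.mem g h a⁻¹ := by decide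

lemma M8.kill : ∀ g h : M8,
    M8.mem g h (Multiplicative.ofAdd (1, 0, 0)) →
    M8.mem g h (Multiplicative.ofAdd (0, 1, 0)) →
    M8.mem g h (Multiplicative.ofAdd (0, 0, 1)) → False := by decide

/-- The key theorem: in a free group, if a commutator is a square, then the commutator is
trivial and the square root is trivial. -/
theorem comm_sq_aux {α : Type*} (u v s : FreeGroup α) (h : s ^ 2 = ⁅u, v⁆) :
    ⁅u, v⁆ = 1 ∧ s = 1 := by
  classical
  set H := closure ({u, v, s} : Set (FreeGroup α)) with hHdef
  have hu : u ∈ H := subset_closure (by simp)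
  have hv : v ∈ H := subset_closure (by simp)
  have hs : s ∈ H := subset_closure (by simp)
  obtain ⟨ι, ⟨bas⟩⟩ := (inferInstance : IsFreeGroup H).nonempty_basis
  set e : H ≃* FreeGroup ι := bas.repr with hedef
  set U : FreeGroup ι := e ⟨u, hu⟩ with hU
  set V : FreeGroup ι := e ⟨v, hv⟩ with hV
  set W : FreeGroup ι := e ⟨s, hs⟩ with hW
  have hHeq : (⟨s, hs⟩ : H) ^ 2 = ⁅(⟨u, hu⟩ : H), ⟨v, hv⟩⁆ := by
    apply Subtype.ext
    simpa [commutatorElement_def] using h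
  have hWeq : W ^ 2 = ⁅U, V⁆ := by
    rw [hU, hV, hW, ← map_pow, hHeq, map_commutatorElement]
  have hgen : ∀ g : FreeGroup ι, g ∈ closure ({U, V, W} : Set (FreeGroup ι)) := by
    have htop := closure_triple_top u v s hu hv hs
    have hcl : closure ({U, V, W} : Set (FreeGroup ι)) = ⊤ := by
      have hmap := congrArg (Subgroup.map (e : H →* FreeGroup ι)) htop
      rw [MonoidHom.map_closure] at hmap
      have himg : (e : H →* FreeGroup ι) '' {⟨u, hu⟩, ⟨v, hv⟩, ⟨s, hs⟩}
          = ({U, V, W} : Set (FreeGroup ι)) := by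
        simp [Set.image_insert_eq, hU, hV, hW]
      rw [himg] at hmap
      rw [hmap, ← MonoidHom.range_eq_map]
      exact MonoidHom.range_eq_top.2 (MulEquiv.surjective e)
    intro g; rw [hcl]; trivial
  by_cases hss : ∀ t₁ t₂ : ι, t₁ = t₂
  · -- rank ≤ 1 : everything commutes
    haveI : Subsingleton ι := ⟨hss⟩
    have hUV : ⁅U, V⁆ = 1 :=
      commutatorElement_eq_one_iff_commute.mpr (FreeGroup.commute_of_subsingleton U V)
    have hW2 : W ^ 2 = 1 := by rw [hWeq, hUV]
    have h1 : ⁅u, v⁆ = 1 := by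
      have hH1 : ⁅(⟨u, hu⟩ : H), (⟨v, hv⟩ : H)⁆ = (1 : H) := by
        apply e.injective
        rw [map_commutatorElement, map_one, ← hU, ← hV, hUV]
      have := congrArg H.subtype hH1
      simpa [commutatorElement] using this
    have hW1 : W = 1 := by
      by_cases hne : Nonempty ι
      · obtain ⟨t₀⟩ := hne
        obtain ⟨n, hn⟩ := FreeGroup.exists_zpow t₀ W
        set ζ : FreeGroup ι →* Multiplicative ℤ :=
          FreeGroup.lift (fun _ => Multiplicative.ofAdd (1 : ℤ)) with hζ
        have hζW : ζ W = Multiplicative.ofAdd (n : ℤ) := by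
          rw [hn, map_zpow, hζ, FreeGroup.lift_apply_of, ← ofAdd_zsmul]
          norm_num
        have h2 : (ζ W) ^ 2 = 1 := by rw [← map_pow, hW2, map_one]
        rw [hζW] at h2
        have : Multiplicative.toAdd ((Multiplicative.ofAdd (n:ℤ)) ^ 2)
            = Multiplicative.toAdd (1 : Multiplicative ℤ) := by rw [h2]
        simp only [pow_two, toAdd_mul, toAdd_ofAdd, toAdd_one] at this
        have hn0 : n = 0 := by omega
        rw [hn, hn0, zpow_zero]
      · exact FreeGroup.eq_one_of_empty hne W
    have hs1 : s = 1 := by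
      have : (⟨s, hs⟩ : H) = 1 := by
        apply e.injective
        rw [map_one, ← hW, hW1]
      simpa using congrArg H.subtype this
    exact ⟨h1, hs1⟩
  · -- at least two generators
    push_neg at hss
    obtain ⟨p, q, hpq⟩ := hss
    -- there is no third generator
    have hno3 : ∀ r : ι, r = p ∨ r = q := by
      intro r
      by_contra hr
      push_neg at hr
      obtain ⟨hrp, hrq⟩ := hr
      set f3 : ι → Multiplicative (ℤ × ℤ × ℤ) := fun t =>
        Multiplicative.ofAdd
          ((if t = p then 1 else 0), (if t = q then 1 else 0), (if t = r then 1 else 0))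
        with hf3
      set χ : FreeGroup ι →* Multiplicative (ℤ × ℤ × ℤ) := FreeGroup.lift f3 with hχ
      have hχW : χ W = 1 := by
        apply mult_sq_triple
        rw [← map_pow, hWeq, map_commutatorElement]
        exact commutatorElement_eq_one_iff_commute.mpr (mul_comm _ _)
      set μa : (ℤ × ℤ × ℤ) →+ (ZMod 2 × ZMod 2 × ZMod 2) :=
        (Int.castAddHom (ZMod 2)).prodMap
          ((Int.castAddHom (ZMod 2)).prodMap (Int.castAddHom (ZMod 2))) with hμa
      set μ : Multiplicative (ℤ × ℤ × ℤ) →* M8 := AddMonoidHom.toMultiplicative μa with hμ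
      set Θ : FreeGroup ι →* M8 := μ.comp χ with hΘ
      set g8 := Θ U with hg8
      set h8 := Θ V with hh8
      set K8 : Subgroup M8 :=
        { carrier := {x | M8.mem g8 h8 x}
          one_mem' := Or.inl rfl
          mul_mem' := fun ha hb => M8.mul_mem g8 h8 _ _ ha hb
          inv_mem' := fun ha => M8.inv_mem g8 h8 _ ha } with hK8
      have hΘmem : ∀ w : FreeGroup ι, M8.mem g8 h8 (Θ w) := by
        intro w
        have hsub : closure ({U, V, W} : Set (FreeGroup ι)) ≤ K8.comap Θ := by
          apply closure_le _ |>.mpr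
          intro x hx
          simp only [Set.mem_insert_iff, Set.mem_singleton_iff] at hx
          rcases hx with rfl | rfl | rfl
          · exact Or.inr (Or.inl rfl)
          · exact Or.inr (Or.inr (Or.inl rfl))
          · show M8.mem g8 h8 (Θ W)
            have : Θ W = 1 := by rw [hΘ, MonoidHom.comp_apply, hχW, map_one]
            rw [this]; exact Or.inl rfl
        exact hsub (hgen w)
      have hppq : ¬ p = q := hpq
      have hppr : ¬ p = r := Ne.symm hrp
      have hqqp : ¬ q = p := Ne.symm hpq
      have hqqr : ¬ q = r := Ne.symm hrq
      have hrrp : ¬ r = p := hrp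
      have hrrq : ¬ r = q := hrq
      have cp : Θ (FreeGroup.of p) = Multiplicative.ofAdd ((1 : ZMod 2), 0, 0) := by
        rw [hΘ, MonoidHom.comp_apply, hχ, FreeGroup.lift_apply_of, hf3]
        simp only [if_pos rfl, if_neg hppq, if_neg hppr]
        decide
      have cq : Θ (FreeGroup.of q) = Multiplicative.ofAdd ((0 : ZMod 2), 1, 0) := by
        rw [hΘ, MonoidHom.comp_apply, hχ, FreeGroup.lift_apply_of, hf3]
        simp only [if_pos rfl, if_neg hqqp, if_neg hqqr]
        decide
      have cr : Θ (FreeGroup.of r) = Multiplicative.ofAdd ((0 : ZMod 2), 0, 1) := by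
        rw [hΘ, MonoidHom.comp_apply, hχ, FreeGroup.lift_apply_of, hf3]
        simp only [if_pos rfl, if_neg hrrp, if_neg hrrq]
        decide
      exact M8.kill g8 h8 (cp ▸ hΘmem (FreeGroup.of p)) (cq ▸ hΘmem (FreeGroup.of q))
        (cr ▸ hΘmem (FreeGroup.of r))
    -- Heisenberg contradiction
    exfalso
    set fH : ι → Heis := fun t => if t = p then Heis.X else Heis.Y with hfH
    set Ψ : FreeGroup ι →* Heis := FreeGroup.lift fH with hΨ
    set φ : FreeGroup ι →* Multiplicative (ℤ × ℤ) := Heis.proj.comp Ψ with hφ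
    have hφW : φ W = 1 := by
      apply mult_sq_pair
      rw [← map_pow, hWeq, map_commutatorElement]
      exact commutatorElement_eq_one_iff_commute.mpr (mul_comm _ _)
    have hWa : (Ψ W).a = 0 ∧ (Ψ W).b = 0 := by
      have h0 : Multiplicative.ofAdd ((Ψ W).a, (Ψ W).b)
          = (1 : Multiplicative (ℤ × ℤ)) := by
        rw [← Heis.proj_apply, ← MonoidHom.comp_apply, ← hφ, hφW]
      have h1 : ((Ψ W).a, (Ψ W).b) = ((0 : ℤ), (0 : ℤ)) := by
        have := congrArg Multiplicative.toAdd h0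
        simpa using this
      exact ⟨congrArg Prod.fst h1, congrArg Prod.snd h1⟩
    have heq : (Ψ W) ^ 2 = ⁅Ψ U, Ψ V⁆ := by rw [← map_pow, hWeq, map_commutatorElement]
    rw [Heis.commutator_eq, Heis.sq_eq] at heq
    have hdet : 2 * (Ψ W).c = (Ψ U).a * (Ψ V).b - (Ψ U).b * (Ψ V).a := by
      have hc : 2 * (Ψ W).c + (Ψ W).a * (Ψ W).b
          = (Ψ U).a * (Ψ V).b - (Ψ U).b * (Ψ V).a := congrArg Heis.c heq
      rw [hWa.1, hWa.2] at hc
      linarith [hc]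
    -- every image under φ is of the form (φ U)^m (φ V)^n
    have hform : ∀ w : FreeGroup ι, ∃ m n : ℤ, φ w = (φ U) ^ m * (φ V) ^ n := by
      intro w
      set Kmn : Subgroup (Multiplicative (ℤ × ℤ)) :=
        { carrier := {x | ∃ m n : ℤ, x = (φ U) ^ m * (φ V) ^ n}
          one_mem' := ⟨0, 0, by simp⟩
          mul_mem' := by
            rintro a b ⟨m, n, rfl⟩ ⟨m', n', rfl⟩
            exact ⟨m + m', n + n', by rw [mul_mul_mul_comm, ← zpow_add, ← zpow_add]⟩
          inv_mem' := by
            rintro a ⟨m, n, rfl⟩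
            exact ⟨-m, -n, by rw [mul_inv, zpow_neg, zpow_neg]⟩ } with hKmn
      have hsub : closure ({U, V, W} : Set (FreeGroup ι)) ≤ Kmn.comap φ := by
        apply closure_le _ |>.mpr
        intro x hx
        simp only [Set.mem_insert_iff, Set.mem_singleton_iff] at hx
        rcases hx with rfl | rfl | rfl
        · exact ⟨1, 0, by simp⟩
        · exact ⟨0, 1, by simp⟩
        · exact ⟨0, 0, by simp [hφW]⟩
      exact hsub (hgen w)
    obtain ⟨m₁, n₁, hm1⟩ := hform (FreeGroup.of p)
    obtain ⟨m₂, n₂, hm2⟩ := hform (FreeGroup.of q)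
    -- compute φ (of p), φ (of q)
    have hφp : φ (FreeGroup.of p) = Multiplicative.ofAdd ((1 : ℤ), 0) := by
      rw [hφ, MonoidHom.comp_apply, hΨ, FreeGroup.lift_apply_of, hfH]
      simp [Heis.X]
    have hφq : φ (FreeGroup.of q) = Multiplicative.ofAdd ((0 : ℤ), 1) := by
      rw [hφ, MonoidHom.comp_apply, hΨ, FreeGroup.lift_apply_of, hfH]
      simp [if_neg (Ne.symm hpq), Heis.Y]
    -- φ U and φ V in coordinates
    have hφU : φ U = Multiplicative.ofAdd ((Ψ U).a, (Ψ U).b) := by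
      rw [hφ, MonoidHom.comp_apply, Heis.proj_apply]
    have hφV : φ V = Multiplicative.ofAdd ((Ψ V).a, (Ψ V).b) := by
      rw [hφ, MonoidHom.comp_apply, Heis.proj_apply]
    set A := (Ψ U).a with hA
    set B := (Ψ U).b with hB
    set C := (Ψ V).a with hC
    set D := (Ψ V).b with hD
    have hzpow : ∀ (a b : ℤ) (m : ℤ),
        (Multiplicative.ofAdd (a, b)) ^ m = Multiplicative.ofAdd (m * a, m * b) := by
      intro a b m
      rw [← ofAdd_zsmul, Prod.smul_mk, smul_eq_mul, smul_eq_mul]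
    rw [hφp, hφU, hφV, hzpow, hzpow] at hm1
    rw [hφq, hφU, hφV, hzpow, hzpow] at hm2
    have hm1' : ((1 : ℤ), (0 : ℤ)) = (m₁ * A + n₁ * C, m₁ * B + n₁ * D) := by
      have := congrArg Multiplicative.toAdd hm1
      simpa [← ofAdd_add, Prod.ext_iff] using this
    have hm2' : ((0 : ℤ), (1 : ℤ)) = (m₂ * A + n₂ * C, m₂ * B + n₂ * D) := by
      have := congrArg Multiplicative.toAdd hm2
      simpa [← ofAdd_add, Prod.ext_iff] using this
    have e1 : m₁ * A + n₁ * C = 1 := (congrArg Prod.fst hm1').symm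
    have e2 : m₁ * B + n₁ * D = 0 := (congrArg Prod.snd hm1').symm
    have e3 : m₂ * A + n₂ * C = 0 := (congrArg Prod.fst hm2').symm
    have e4 : m₂ * B + n₂ * D = 1 := (congrArg Prod.snd hm2').symm
    have expand : (m₁ * A + n₁ * C) * (m₂ * B + n₂ * D)
        - (m₂ * A + n₂ * C) * (m₁ * B + n₁ * D)
        = (A * D - B * C) * (m₁ * n₂ - m₂ * n₁) := by ring
    rw [e1, e2, e3, e4] at expand
    rw [← hdet] at expand
    have : 2 * ((Ψ W).c * (m₁ * n₂ - m₂ * n₁)) = 1 := by linarith [expand]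
    set T := (Ψ W).c * (m₁ * n₂ - m₂ * n₁) with hT
    omega

/-- The subgroup generated by two commuting elements of a free group is contained in the set of
powers of a single element. -/
lemma cyclic_of_commuting_pair {α : Type*} (P Q : FreeGroup α) (hPQ : Commute P Q) :
    ∃ c : FreeGroup α, ∀ g ∈ closure ({P, Q} : Set (FreeGroup α)), ∃ n : ℤ, g = c ^ n := by
  classical
  set K := closure ({P, Q} : Set (FreeGroup α)) with hKdef
  have habel : ∀ g₁ ∈ K, ∀ g₂ ∈ K, Commute g₁ g₂ := by
    intro g₁ hg₁ g₂ hg₂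
    induction hg₁, hg₂ using Subgroup.closure_induction₂ with
    | mem x y hx hy =>
        simp only [Set.mem_insert_iff, Set.mem_singleton_iff] at hx hy
        rcases hx with rfl | rfl <;> rcases hy with rfl | rfl
        · exact Commute.refl _
        · exact hPQ
        · exact hPQ.symm
        · exact Commute.refl _
    | one_left x hx => exact Commute.one_left x
    | one_right x hx => exact Commute.one_right x
    | mul_left x y z hx hy hz h₁ h₂ => exact h₁.mul_left h₂
    | mul_right y z x hy hz hx h₁ h₂ => exact h₁.mul_right h₂
    | inv_left x y hx hy h₁ => exact h₁.inv_left
    | inv_right x y hx hy h₁ => exact h₁.inv_right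
  obtain ⟨ι, ⟨bas⟩⟩ := (inferInstance : IsFreeGroup K).nonempty_basis
  set e : K ≃* FreeGroup ι := bas.repr with hedef
  -- FreeGroup ι is abelian
  have habel' : ∀ w₁ w₂ : FreeGroup ι, Commute w₁ w₂ := by
    intro w₁ w₂
    have h1 : e.symm (w₁ * w₂) = e.symm (w₂ * w₁) := by
      rw [map_mul, map_mul]
      have hc := habel (e.symm w₁) (e.symm w₁).2 (e.symm w₂) (e.symm w₂).2
      exact Subtype.ext hc
    exact e.symm.injective h1
  -- hence ι is a subsingleton
  haveI : Subsingleton ι := by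
    constructor
    intro t₁ t₂
    by_contra ht
    set fh : ι → Heis := fun t => if t = t₁ then Heis.X else Heis.Y with hfh
    have hcomm := habel' (FreeGroup.of t₁) (FreeGroup.of t₂)
    have := congrArg (FreeGroup.lift fh) hcomm
    rw [map_mul, map_mul, FreeGroup.lift_apply_of, FreeGroup.lift_apply_of, hfh] at this
    simp only [if_pos rfl, if_neg (Ne.symm ht)] at this
    exact Heis.not_commute_XY this
  by_cases hne : Nonempty ι
  · obtain ⟨t₀⟩ := hne
    refine ⟨(e.symm (FreeGroup.of t₀) : FreeGroup α), ?_⟩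
    intro g hg
    obtain ⟨n, hn⟩ := FreeGroup.exists_zpow t₀ (e ⟨g, hg⟩)
    refine ⟨n, ?_⟩
    have : (⟨g, hg⟩ : K) = e.symm (FreeGroup.of t₀) ^ n := by
      rw [← map_zpow, ← hn, MulEquiv.symm_apply_apply]
    have := congrArg K.subtype this
    simpa using this
  · refine ⟨1, ?_⟩
    intro g hg
    refine ⟨0, ?_⟩
    have h1 : e ⟨g, hg⟩ = 1 := FreeGroup.eq_one_of_empty hne _
    have : (⟨g, hg⟩ : K) = 1 := by
      apply e.injective; rw [h1, map_one]
    simpa using congrArg K.subtype this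

theorem stmt_10 (α : Type*) (x y z : FreeGroup α)
    (h : x ^ 2 * y ^ 2 * z ^ 2 = 1) :
    (⁅x, y⁆ = 1 ∧ ⁅x, z⁆ = 1 ∧ ⁅y, z⁆ = 1) ∧
      ∃ c : FreeGroup α, x ∈ Subgroup.zpowers c ∧ y ∈ Subgroup.zpowers c ∧
        z ∈ Subgroup.zpowers c := by
  -- Dyck's substitution: with P = x*y, Q = y*z, R = y*z*x we have
  -- ⁅P, Q⁆ * R ^ 2 = x⁻¹ * (x ^ 2 * y ^ 2 * z ^ 2) * x.
  have hprod : x * x * (y * y) * (z * z) = 1 := by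
    have hx2 : x ^ 2 = x * x := pow_two x
    have hy2 : y ^ 2 = y * y := pow_two y
    have hz2 : z ^ 2 = z * z := pow_two z
    rw [hx2, hy2, hz2] at h
    exact h
  have hid : ⁅x * y, y * z⁆ * ((y * z * x) * (y * z * x))
      = x⁻¹ * (x * x * (y * y) * (z * z)) * x := by
    rw [commutatorElement_def]
    group
  rw [hprod] at hid
  have h1 : ⁅x * y, y * z⁆ * ((y * z * x) * (y * z * x)) = 1 := by rw [hid]; group
  have h2 : ⁅x * y, y * z⁆ = ((y * z * x) * (y * z * x))⁻¹ := by
    rw [eq_inv_iff_mul_eq_one]; exact h1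
  have hid' : ((y * z * x)⁻¹) ^ 2 = ⁅x * y, y * z⁆ := by
    rw [pow_two, h2]
    group
  obtain ⟨hc1, hRinv⟩ := comm_sq_aux (x * y) (y * z) ((y * z * x)⁻¹) hid'
  have hR1 : y * z * x = 1 := by rwa [inv_eq_one] at hRinv
  have hcomm : Commute (x * y) (y * z) := commutatorElement_eq_one_iff_commute.mp hc1
  obtain ⟨c, hcyc⟩ := cyclic_of_commuting_pair (x * y) (y * z) hcomm
  have hPmem : (x * y) ∈ closure ({x * y, y * z} : Set (FreeGroup α)) :=
    subset_closure (by simp)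
  have hQmem : (y * z) ∈ closure ({x * y, y * z} : Set (FreeGroup α)) :=
    subset_closure (by simp)
  have hzx : z * x = y⁻¹ := by
    apply eq_inv_of_mul_eq_one_right
    calc y * (z * x) = y * z * x := (mul_assoc y z x).symm
    _ = 1 := hR1
  have hxmem : x ∈ closure ({x * y, y * z} : Set (FreeGroup α)) := by
    have hx1 : x = (y * z)⁻¹ := eq_inv_of_mul_eq_one_right hR1
    have hmem := inv_mem hQmem
    rwa [← hx1] at hmem
  have hymem : y ∈ closure ({x * y, y * z} : Set (FreeGroup α)) := by
    have hy1 : (y * z) * (x * y) = y := by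
      calc (y * z) * (x * y) = y * ((z * x) * y) := by group
      _ = y * (y⁻¹ * y) := by rw [hzx]
      _ = y := by group
    have hmem := mul_mem hQmem hPmem
    rwa [hy1] at hmem
  have hzmem : z ∈ closure ({x * y, y * z} : Set (FreeGroup α)) := by
    have hz1 : z = (x * y)⁻¹ := by
      calc z = (z * x) * x⁻¹ := by group
      _ = y⁻¹ * x⁻¹ := by rw [hzx]
      _ = (x * y)⁻¹ := by group
    have hmem := inv_mem hPmem
    rwa [← hz1] at hmem
  obtain ⟨i, hxi⟩ := hcyc x hxmem
  obtain ⟨j, hyj⟩ := hcyc y hymem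
  obtain ⟨k, hzk⟩ := hcyc z hzmem
  refine ⟨⟨?_, ?_, ?_⟩, c, ?_, ?_, ?_⟩
  · rw [hxi, hyj]
    exact commutatorElement_eq_one_iff_commute.mpr ((Commute.refl c).zpow_zpow i j)
  · rw [hxi, hzk]
    exact commutatorElement_eq_one_iff_commute.mpr ((Commute.refl c).zpow_zpow i k)
  · rw [hyj, hzk]
    exact commutatorElement_eq_one_iff_commute.mpr ((Commute.refl c).zpow_zpow j k)
  · rw [Subgroup.mem_zpowers_iff]; exact ⟨i, hxi.symm⟩
  · rw [Subgroup.mem_zpowers_iff]; exact ⟨j, hyj.symm⟩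
  · rw [Subgroup.mem_zpowers_iff]; exact ⟨k, hzk.symm⟩
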